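/- Let d ≥ 1 and let A be a circulant, semi-involutory matrix of order 2^d × 2^d over a finite field F of characteristic 2, with associated non-singular diagonal matrices D₁ and D₂ satisfying A⁻¹ = D₁·A·D₂, D₁^{2^d} = k₁·I and D₂^{2^d} = k₂·I for non-zero scalars k₁, k₂ ∈ F (such associated diagonal matrices exist by the characterization of circulant semi-involutory matrices). Then trace(D₁) = 0 and trace(D₂) = 0. -/

import Mathlib

open Matrix

/-- The `n × n` circulant matrix with first row `c₀, c₁, …, c_{n-1}`, i.e. the matrix whose
`(i,j)` entry is `c_{(j - i) mod n}`. -/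
def circulantM {n : ℕ} {F : Type*} (c : Fin n → F) : Matrix (Fin n) (Fin n) F :=
  Matrix.of fun i j => c (j - i)

lemma trace_zero_aux {F : Type*} [Field F] [CharP F 2] {d : ℕ} (hd : 1 ≤ d)
    (D : Matrix (Fin (2 ^ d)) (Fin (2 ^ d)) F) (hdiag : D.IsDiag) (k : F)
    (hp : D ^ (2 ^ d) = k • (1 : Matrix (Fin (2 ^ d)) (Fin (2 ^ d)) F)) :
    D.trace = 0 := by
  have hD : D = Matrix.diagonal D.diag := hdiag.diagonal_diag.symm
  have hentry : ∀ i, D.diag i ^ (2 ^ d) = k := by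
    intro i
    have h := congrArg (fun M : Matrix (Fin (2 ^ d)) (Fin (2 ^ d)) F => M i i) hp
    rw [hD] at h
    simpa [Matrix.diagonal_pow, Matrix.diagonal_apply_eq] using h
  have hpos : 0 < 2 ^ d := Nat.pow_pos (by norm_num)
  have i0 : Fin (2 ^ d) := ⟨0, hpos⟩
  have heq : ∀ i, D.diag i = D.diag i0 := by
    intro i
    have : (D.diag i - D.diag i0) ^ (2 ^ d) = 0 := by
      rw [sub_pow_char_pow, hentry, hentry, sub_self]
    have := pow_eq_zero_iff (n := 2 ^ d) hpos.ne' |>.mp this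
    exact sub_eq_zero.mp this
  have htr : D.trace = ∑ i, D.diag i := rfl
  rw [htr]
  calc ∑ i : Fin (2 ^ d), D.diag i = ∑ _i : Fin (2 ^ d), D.diag i0 := by
        exact Finset.sum_congr rfl fun i _ => heq i
    _ = (2 ^ d : ℕ) • D.diag i0 := by simp
    _ = ((2 ^ d : ℕ) : F) * D.diag i0 := by rw [nsmul_eq_mul]
    _ = 0 := by
        have : ((2 ^ d : ℕ) : F) = 0 := by
          rw [CharP.cast_eq_zero_iff F 2]
          exact dvd_pow_self 2 (by omega)
        rw [this, zero_mul]

/-- Let `d ≥ 1` and let `A` be a circulant, semi-involutory matrix of order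
`2^d × 2^d` over a finite field `F` of characteristic 2, with associated non-singular diagonal
matrices `D₁, D₂` satisfying `A⁻¹ = D₁ * A * D₂`, `D₁ ^ (2^d) = k₁ • I` and
`D₂ ^ (2^d) = k₂ • I` for non-zero scalars `k₁, k₂ ∈ F`. Then `trace D₁ = 0` and
`trace D₂ = 0`. -/
theorem trace_eq_zero_of_circulant_semiInvolutory_two_pow {F : Type*} [Field F] [Fintype F]
    [CharP F 2] {d : ℕ} (hd : 1 ≤ d)
    (c : Fin (2 ^ d) → F) (A : Matrix (Fin (2 ^ d)) (Fin (2 ^ d)) F) (hA : A = circulantM c)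
    (hAdet : A.det ≠ 0)
    (D₁ D₂ : Matrix (Fin (2 ^ d)) (Fin (2 ^ d)) F)
    (hD₁diag : D₁.IsDiag) (hD₂diag : D₂.IsDiag)
    (hD₁det : D₁.det ≠ 0) (hD₂det : D₂.det ≠ 0)
    (k₁ k₂ : F) (hk₁ : k₁ ≠ 0) (hk₂ : k₂ ≠ 0)
    (hp₁ : D₁ ^ (2 ^ d) = k₁ • (1 : Matrix (Fin (2 ^ d)) (Fin (2 ^ d)) F))
    (hp₂ : D₂ ^ (2 ^ d) = k₂ • (1 : Matrix (Fin (2 ^ d)) (Fin (2 ^ d)) F))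
    (hsi : A⁻¹ = D₁ * A * D₂) :
    D₁.trace = 0 ∧ D₂.trace = 0 := by
  exact ⟨trace_zero_aux hd D₁ hD₁diag k₁ hp₁, trace_zero_aux hd D₂ hD₂diag k₂ hp₂⟩
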